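/- Let Φ and φ be the standard normal CDF and PDF. For any x ∈ ℝ, ∫_ℝ (1 + (|x| + |t| - |x - t|)/2) φ(t) dt = 1 + 1/√(2π) + |x|/2 - x(Φ(x) - 1/2) - φ(x). -/

import Mathlib

open MeasureTheory

/-- The standard normal density. -/
noncomputable def phi (t : ℝ) : ℝ := Real.exp (-(t ^ 2) / 2) / Real.sqrt (2 * Real.pi)

/-- The standard normal CDF. -/
noncomputable def Phi (x : ℝ) : ℝ := ∫ t in Set.Iic x, phi t

lemma phi_nonneg (t : ℝ) : 0 ≤ phi t :=
  div_nonneg (Real.exp_nonneg _) (Real.sqrt_nonneg _)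

lemma phi_eq (t : ℝ) : phi t = Real.exp (-(1/2) * t ^ 2) / Real.sqrt (2 * Real.pi) := by
  unfold phi; ring_nf

lemma phi_integrable : Integrable phi := by
  have := (integrable_exp_neg_mul_sq (by norm_num : (0:ℝ) < 1/2)).div_const
    (Real.sqrt (2 * Real.pi))
  exact this.congr (Filter.Eventually.of_forall fun t => (phi_eq t).symm)

lemma id_mul_phi_integrable : Integrable (fun t => t * phi t) := by
  have := (integrable_mul_exp_neg_mul_sq (by norm_num : (0:ℝ) < 1/2)).div_const
    (Real.sqrt (2 * Real.pi))
  exact this.congr (Filter.Eventually.of_forall fun t => by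
    show t * Real.exp (-(1/2) * t ^ 2) / Real.sqrt (2 * Real.pi) = t * phi t
    rw [phi_eq]; ring)

lemma abs_mul_phi_integrable : Integrable (fun t => |t| * phi t) := by
  refine id_mul_phi_integrable.abs.congr (Filter.Eventually.of_forall fun t => ?_)
  show |t * phi t| = |t| * phi t
  rw [abs_mul, abs_of_nonneg (phi_nonneg t)]

lemma abs_sub_mul_phi_integrable (x : ℝ) : Integrable (fun t => |x - t| * phi t) := by
  refine Integrable.mono' ((phi_integrable.const_mul |x|).add abs_mul_phi_integrable)
    ?_ (Filter.Eventually.of_forall fun t => ?_)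
  · exact (Continuous.mul (continuous_const.sub continuous_id).abs
      (by unfold phi; continuity)).aestronglyMeasurable
  · simp only [Pi.add_apply]
    rw [Real.norm_eq_abs, abs_of_nonneg (mul_nonneg (abs_nonneg _) (phi_nonneg t))]
    have h1 : |x - t| ≤ |x| + |t| := abs_sub x t
    nlinarith [phi_nonneg t, abs_nonneg (x - t), abs_nonneg t, abs_nonneg x]

lemma hasDerivAt_neg_phi (t : ℝ) : HasDerivAt (fun s => -phi s) (t * phi t) t := by
  have h1 : HasDerivAt (fun s : ℝ => -(s ^ 2) / 2) (-t) t := by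
    have := ((hasDerivAt_pow 2 t).div_const 2).fun_neg
    simp only [Nat.cast_ofNat, pow_one] at this
    exact (this.congr_deriv (by norm_num)).congr_of_eventuallyEq
      (Filter.Eventually.of_forall fun s => by ring)
  have h2 := (h1.exp.div_const (Real.sqrt (2 * Real.pi))).fun_neg
  exact h2.congr_deriv (by unfold phi; ring)

lemma sq_tendsto_atBot : Filter.Tendsto (fun t : ℝ => t ^ 2) Filter.atBot Filter.atTop := by
  have := (Filter.tendsto_pow_atTop (two_ne_zero)).comp
    (Filter.tendsto_neg_atBot_atTop (G := ℝ))
  exact this.congr (fun t => by simp [Function.comp])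

lemma phi_tendsto_atBot : Filter.Tendsto phi Filter.atBot (nhds 0) := by
  have h : Filter.Tendsto (fun t : ℝ => -(t ^ 2) / 2) Filter.atBot Filter.atBot := by
    apply Filter.Tendsto.atBot_div_const (by norm_num)
    exact Filter.tendsto_neg_atBot_iff.mpr sq_tendsto_atBot
  have := (Real.tendsto_exp_atBot.comp h).div_const (Real.sqrt (2 * Real.pi))
  rw [zero_div] at this
  exact this.congr (fun t => rfl)

lemma phi_tendsto_atTop : Filter.Tendsto phi Filter.atTop (nhds 0) := by
  have h : Filter.Tendsto (fun t : ℝ => -(t ^ 2) / 2) Filter.atTop Filter.atBot := by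
    apply Filter.Tendsto.atBot_div_const (by norm_num)
    exact Filter.tendsto_neg_atBot_iff.mpr (Filter.tendsto_pow_atTop two_ne_zero)
  have := (Real.tendsto_exp_atBot.comp h).div_const (Real.sqrt (2 * Real.pi))
  rw [zero_div] at this
  exact this.congr (fun t => rfl)

lemma integral_id_mul_phi_Iic (x : ℝ) : ∫ t in Set.Iic x, t * phi t = -phi x := by
  have := integral_Iic_of_hasDerivAt_of_tendsto' (f := fun s => -phi s)
    (f' := fun t => t * phi t) (a := x) (m := 0)
    (fun t _ => hasDerivAt_neg_phi t) id_mul_phi_integrable.integrableOn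
    (by simpa using phi_tendsto_atBot.neg)
  simpa using this

lemma integral_id_mul_phi_Ioi (x : ℝ) : ∫ t in Set.Ioi x, t * phi t = phi x := by
  have := integral_Ioi_of_hasDerivAt_of_tendsto' (f := fun s => -phi s)
    (f' := fun t => t * phi t) (a := x) (m := 0)
    (fun t _ => hasDerivAt_neg_phi t) id_mul_phi_integrable.integrableOn
    (by simpa using phi_tendsto_atTop.neg)
  simpa using this

lemma integral_phi : ∫ t : ℝ, phi t = 1 := by
  have h := integral_gaussian (1/2)
  have : ∫ t : ℝ, phi t = (∫ t : ℝ, Real.exp (-(1/2) * t ^ 2)) / Real.sqrt (2 * Real.pi) := by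
    rw [← integral_div]
    exact integral_congr_ae (Filter.Eventually.of_forall fun t => phi_eq t)
  rw [this, h]
  rw [show Real.pi / (1/2) = 2 * Real.pi by ring]
  rw [div_self]
  positivity

lemma integral_phi_Ioi (x : ℝ) : ∫ t in Set.Ioi x, phi t = 1 - Phi x := by
  have := intervalIntegral.integral_Iic_add_Ioi (b := x) phi_integrable.integrableOn phi_integrable.integrableOn
  rw [integral_phi] at this
  unfold Phi; linarith

lemma phi_zero : phi 0 = 1 / Real.sqrt (2 * Real.pi) := by
  simp [phi]

lemma integral_abs_mul_phi : ∫ t : ℝ, |t| * phi t = 2 / Real.sqrt (2 * Real.pi) := by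
  have h := intervalIntegral.integral_Iic_add_Ioi (b := 0) abs_mul_phi_integrable.integrableOn
    abs_mul_phi_integrable.integrableOn
  have h1 : ∫ t in Set.Iic (0:ℝ), |t| * phi t = phi 0 := by
    rw [setIntegral_congr_fun measurableSet_Iic
      (fun t (ht : t ≤ 0) => by rw [abs_of_nonpos ht])]
    have : ∫ t in Set.Iic (0:ℝ), -t * phi t = -∫ t in Set.Iic (0:ℝ), t * phi t := by
      rw [← integral_neg]; exact integral_congr_ae (Filter.Eventually.of_forall fun t => by ring)
    rw [this, integral_id_mul_phi_Iic]; ring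
  have h2 : ∫ t in Set.Ioi (0:ℝ), |t| * phi t = phi 0 := by
    rw [setIntegral_congr_fun measurableSet_Ioi
      (fun t (ht : 0 < t) => by rw [abs_of_pos ht])]
    exact integral_id_mul_phi_Ioi 0
  rw [← h, h1, h2, phi_zero]; ring

lemma integral_abs_sub_mul_phi (x : ℝ) :
    ∫ t : ℝ, |x - t| * phi t = 2 * phi x + x * (2 * Phi x - 1) := by
  have h := intervalIntegral.integral_Iic_add_Ioi (b := x) (abs_sub_mul_phi_integrable x).integrableOn
    (abs_sub_mul_phi_integrable x).integrableOn
  have h1 : ∫ t in Set.Iic x, |x - t| * phi t = x * Phi x + phi x := by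
    rw [setIntegral_congr_fun measurableSet_Iic
      (fun t (ht : t ≤ x) => by rw [abs_of_nonneg (by linarith : (0:ℝ) ≤ x - t)])]
    have : ∫ t in Set.Iic x, (x - t) * phi t
        = (x * ∫ t in Set.Iic x, phi t) - ∫ t in Set.Iic x, t * phi t := by
      rw [← integral_const_mul, ← integral_sub (phi_integrable.integrableOn.const_mul x)
        id_mul_phi_integrable.integrableOn]
      exact integral_congr_ae (Filter.Eventually.of_forall fun t => by ring)
    rw [this, integral_id_mul_phi_Iic]
    unfold Phi; ring
  have h2 : ∫ t in Set.Ioi x, |x - t| * phi t = phi x - x * (1 - Phi x) := by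
    rw [setIntegral_congr_fun measurableSet_Ioi
      (fun t (ht : x < t) => by rw [abs_of_nonpos (by linarith : x - t ≤ 0), neg_sub])]
    have : ∫ t in Set.Ioi x, (t - x) * phi t
        = (∫ t in Set.Ioi x, t * phi t) - x * ∫ t in Set.Ioi x, phi t := by
      rw [← integral_const_mul, ← integral_sub id_mul_phi_integrable.integrableOn
        (phi_integrable.integrableOn.const_mul x)]
      exact integral_congr_ae (Filter.Eventually.of_forall fun t => by ring)
    rw [this, integral_id_mul_phi_Ioi, integral_phi_Ioi]
  rw [← h, h1, h2]; ring

/-- `∫ (1 + (|x|+|t|-|x-t|)/2) φ(t) dt = 1 + 1/√(2π) + |x|/2 - x(Φ(x)-1/2) - φ(x)`. -/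
theorem integral_kernel_gaussian (x : ℝ) :
    ∫ t : ℝ, (1 + (|x| + |t| - |x - t|) / 2) * phi t
      = 1 + 1 / Real.sqrt (2 * Real.pi) + |x| / 2 - x * (Phi x - 1 / 2) - phi x := by
  have hadd : Integrable (fun t => (1 + |x| / 2) * phi t + |t| * phi t / 2) :=
    (phi_integrable.const_mul _).add (abs_mul_phi_integrable.div_const 2)
  have hsub : Integrable (fun t => |x - t| * phi t / 2) :=
    (abs_sub_mul_phi_integrable x).div_const 2
  have key : ∫ t : ℝ, (1 + (|x| + |t| - |x - t|) / 2) * phi t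
      = (∫ t : ℝ, (1 + |x| / 2) * phi t + |t| * phi t / 2) - ∫ t : ℝ, |x - t| * phi t / 2 := by
    rw [← integral_sub hadd hsub]
    exact integral_congr_ae (Filter.Eventually.of_forall fun t => by ring)
  rw [key, integral_add (phi_integrable.const_mul _) (abs_mul_phi_integrable.div_const 2),
    integral_const_mul, integral_phi]
  have e1 : ∫ t : ℝ, |t| * phi t / 2 = (∫ t : ℝ, |t| * phi t) / 2 := integral_div _ _
  have e2 : ∫ t : ℝ, |x - t| * phi t / 2 = (∫ t : ℝ, |x - t| * phi t) / 2 := integral_div _ _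
  rw [e1, e2, integral_abs_mul_phi, integral_abs_sub_mul_phi]
  ring
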